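/- arXiv:math/0609383 — 2 statements merged into one kernel-verified Lean document; each statement's English description precedes it below -/
import Mathlib

section
/- Let K be an algebraically closed field complete with respect to a nontrivial non-archimedean absolute value. For each u ∈ ℝ^n, the map sending a Laurent polynomial Σ a_m x^m over K to max_m |a_m| e^{-m·u} is a multiplicative norm on the Laurent polynomial ring K[x_1^{±1},...,x_n^{±1}]. -/
open scoped BigOperators

section lexAux

variable {n : ℕ}

lemma lex_add_right_aux {a b c : Fin n → ℤ} (h : toLex a < toLex b) :
    toLex (a + c) < toLex (b + c) := by
  obtain ⟨i, hji, hi⟩ := h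
  exact ⟨i, fun j hj => by simpa using hji j hj, by simpa using hi⟩

lemma lex_add_left_aux {a b c : Fin n → ℤ} (h : toLex a < toLex b) :
    toLex (c + a) < toLex (c + b) := by
  obtain ⟨i, hji, hi⟩ := h
  exact ⟨i, fun j hj => by simpa using hji j hj, by simpa using hi⟩

end lexAux

section abvAux

variable {K : Type*} [Field K] (abv : AbsoluteValue K ℝ)
variable (hna : ∀ x y : K, abv (x + y) ≤ max (abv x) (abv y))

include hna in
lemma na_add_eq_right {x y : K} (h : abv x < abv y) : abv (x + y) = abv y := by
  refine le_antisymm ((hna x y).trans (max_le h.le le_rfl)) ?_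
  by_contra hlt
  push_neg at hlt
  have h2 : abv y ≤ max (abv (x + y)) (abv x) := by
    have := hna (x + y) (-x)
    simpa using this
  rcases max_cases (abv (x + y)) (abv x) with ⟨he, _⟩ | ⟨he, _⟩ <;> rw [he] at h2
  · exact absurd (lt_of_le_of_lt h2 hlt) (lt_irrefl _)
  · exact absurd (lt_of_le_of_lt h2 h) (lt_irrefl _)

include hna in
lemma na_sum_le {ι : Type*} (s : Finset ι) (t : ι → K) {c w : ℝ} (hc : 0 ≤ c) (hw : 0 ≤ w)
    (h : ∀ i ∈ s, abv (t i) * w ≤ c) : abv (∑ i ∈ s, t i) * w ≤ c := by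
  classical
  induction s using Finset.induction_on with
  | empty => simpa using hc
  | insert a s' hni ih =>
    rw [Finset.sum_insert hni]
    calc abv (t a + ∑ i ∈ s', t i) * w ≤ max (abv (t a)) (abv (∑ i ∈ s', t i)) * w :=
          mul_le_mul_of_nonneg_right (hna _ _) hw
      _ = max (abv (t a) * w) (abv (∑ i ∈ s', t i) * w) := (max_mul_of_nonneg _ _ hw)
      _ ≤ c := max_le (h a (Finset.mem_insert_self _ _))
          (ih fun i hi => h i (Finset.mem_insert_of_mem hi))

include hna in
lemma na_sum_lt {ι : Type*} (s : Finset ι) (t : ι → K) {c : ℝ} (hc : 0 < c)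
    (h : ∀ i ∈ s, abv (t i) < c) : abv (∑ i ∈ s, t i) < c := by
  classical
  induction s using Finset.induction_on with
  | empty => simpa using hc
  | insert a s' hni ih =>
    rw [Finset.sum_insert hni]
    exact lt_of_le_of_lt (hna _ _) (max_lt (h a (Finset.mem_insert_self _ _))
      (ih fun i hi => h i (Finset.mem_insert_of_mem hi)))

include hna in
lemma na_sum_eq {ι : Type*} {s : Finset ι} {t : ι → K} {i0 : ι} (hi0 : i0 ∈ s)
    (h0 : t i0 ≠ 0) (h : ∀ i ∈ s, i ≠ i0 → abv (t i) < abv (t i0)) :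
    abv (∑ i ∈ s, t i) = abv (t i0) := by
  classical
  rw [← Finset.add_sum_erase _ _ hi0, add_comm]
  exact na_add_eq_right abv hna
    (na_sum_lt abv hna _ _ (abv.pos h0)
      (fun i hi => h i (Finset.mem_of_mem_erase hi) (Finset.ne_of_mem_erase hi)))

end abvAux

/-- Let `K` be an algebraically closed field, complete with respect to a
nontrivial non-archimedean absolute value. For each `u ∈ ℝ^n`, the map sending a Laurent
polynomial `Σ a_m x^m` over `K` (an element of the Laurent polynomial ring
`AddMonoidAlgebra K (Fin n → ℤ)`) to `max_m |a_m| e^{-m·u}` is a multiplicative norm: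
it is multiplicative on products, satisfies the ultrametric triangle inequality, and
extends the absolute value on constants. -/
theorem gauss_norm_multiplicative (K : Type*) [Field K] [IsAlgClosed K]
    (abv : AbsoluteValue K ℝ)
    (hna : ∀ x y : K, abv (x + y) ≤ max (abv x) (abv y))
    (hnontrivial : ∃ x : K, abv x ≠ 0 ∧ abv x ≠ 1)
    (hcomplete : ∀ s : ℕ → K,
      (∀ ε : ℝ, 0 < ε → ∃ N, ∀ p ≥ N, ∀ q ≥ N, abv (s p - s q) < ε) →
      ∃ L : K, ∀ ε : ℝ, 0 < ε → ∃ N, ∀ p ≥ N, abv (s p - L) < ε)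
    (n : ℕ) (u : Fin n → ℝ)
    (Nu : AddMonoidAlgebra K (Fin n → ℤ) → ℝ)
    (hNu : ∀ f, Nu f = ⨆ m : Fin n → ℤ,
      abv (f.coeff m) * Real.exp (-(∑ j, (m j : ℝ) * u j))) :
    (∀ f g, Nu (f * g) = Nu f * Nu g) ∧
    (∀ f g, Nu (f + g) ≤ max (Nu f) (Nu g)) ∧
    (∀ c : K, Nu (AddMonoidAlgebra.single (0 : Fin n → ℤ) c) = abv c) := by
  classical
  set W : (Fin n → ℤ) → ℝ := fun m => Real.exp (-(∑ j, (m j : ℝ) * u j)) with hWdef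
  have hWpos : ∀ m, 0 < W m := fun m => Real.exp_pos _
  have hWadd : ∀ a b : Fin n → ℤ, W (a + b) = W a * W b := by
    intro a b
    simp only [hWdef]
    rw [← Real.exp_add]
    congr 1
    rw [← neg_add, ← Finset.sum_add_distrib]
    congr 1
    apply Finset.sum_congr rfl
    intro j _
    push_cast [Pi.add_apply]
    ring
  have hW0 : W 0 = 1 := by simp [hWdef]
  have hbdd : ∀ f : AddMonoidAlgebra K (Fin n → ℤ),
      BddAbove (Set.range fun m => abv (f.coeff m) * W m) := by
    intro f
    refine ⟨∑ m ∈ f.coeff.support, abv (f.coeff m) * W m, ?_⟩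
    rintro x ⟨m, rfl⟩
    by_cases hm : m ∈ f.coeff.support
    · exact Finset.single_le_sum (fun i _ => mul_nonneg (abv.nonneg _) (hWpos i).le) hm
    · have h0 : f.coeff m = 0 := Finsupp.notMem_support_iff.mp hm
      simp only [h0, map_zero, zero_mul]
      exact Finset.sum_nonneg fun i _ => mul_nonneg (abv.nonneg _) (hWpos i).le
  have hge : ∀ (f : AddMonoidAlgebra K (Fin n → ℤ)) (m : Fin n → ℤ),
      abv (f.coeff m) * W m ≤ Nu f := by
    intro f m
    rw [hNu]
    exact le_ciSup (hbdd f) m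
  have hle : ∀ (f : AddMonoidAlgebra K (Fin n → ℤ)) (c : ℝ),
      (∀ m, abv (f.coeff m) * W m ≤ c) → Nu f ≤ c := by
    intro f c h
    rw [hNu]
    exact ciSup_le h
  have hnonneg : ∀ f, 0 ≤ Nu f := fun f =>
    le_trans (mul_nonneg (abv.nonneg _) (hWpos 0).le) (hge f 0)
  have hattain : ∀ f : AddMonoidAlgebra K (Fin n → ℤ), f ≠ 0 →
      ∃ m ∈ f.coeff.support, Nu f = abv (f.coeff m) * W m := by
    intro f hf
    have hne : f.coeff.support.Nonempty := Finsupp.support_nonempty_iff.mpr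
        (fun h => hf (AddMonoidAlgebra.coeff_injective (h.trans AddMonoidAlgebra.coeff_zero.symm)))
    obtain ⟨m0, hm0, hmax⟩ := f.coeff.support.exists_max_image (fun m => abv (f.coeff m) * W m) hne
    refine ⟨m0, hm0, le_antisymm (hle f _ ?_) (hge f m0)⟩
    intro m
    by_cases hm : m ∈ f.coeff.support
    · exact hmax m hm
    · have h0 : f.coeff m = 0 := Finsupp.notMem_support_iff.mp hm
      simp only [h0, map_zero, zero_mul]
      exact mul_nonneg (abv.nonneg _) (hWpos m0).le
  have hNuzero : Nu (0 : AddMonoidAlgebra K (Fin n → ℤ)) = 0 := by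
    refine le_antisymm (hle _ 0 fun m => ?_) (hnonneg _)
    simp [Finsupp.zero_apply]
  refine ⟨?_, ?_, ?_⟩
  · -- multiplicativity
    intro f g
    by_cases hf : f = 0
    · rw [hf, zero_mul, hNuzero, zero_mul]
    by_cases hg : g = 0
    · rw [hg, mul_zero, hNuzero, mul_zero]
    -- choose lex-maximal maximizers
    obtain ⟨m0f, hm0f, he0f⟩ := hattain f hf
    obtain ⟨m0g, hm0g, he0g⟩ := hattain g hg
    set Sf : Finset (Fin n → ℤ) :=
      f.coeff.support.filter (fun m => abv (f.coeff m) * W m = Nu f) with hSf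
    set Sg : Finset (Fin n → ℤ) :=
      g.coeff.support.filter (fun m => abv (g.coeff m) * W m = Nu g) with hSg
    letI : LinearOrder (Lex (Fin n → ℤ)) :=
      @Pi.Lex.linearOrder (Fin n) (fun _ => ℤ)
        (inferInstance : LinearOrder (Fin n)) (inferInstance : WellFoundedLT (Fin n))
        inferInstance
    have hSfne : Sf.Nonempty := ⟨m0f, Finset.mem_filter.mpr ⟨hm0f, he0f.symm⟩⟩
    have hSgne : Sg.Nonempty := ⟨m0g, Finset.mem_filter.mpr ⟨hm0g, he0g.symm⟩⟩
    obtain ⟨mf, hmfS, hmfmax⟩ := Sf.exists_max_image (fun m => toLex m) hSfne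
    obtain ⟨mg, hmgS, hmgmax⟩ := Sg.exists_max_image (fun m => toLex m) hSgne
    have hmf_sup : mf ∈ f.coeff.support := (Finset.mem_filter.mp hmfS).1
    have hmg_sup : mg ∈ g.coeff.support := (Finset.mem_filter.mp hmgS).1
    have hmf_eq : abv (f.coeff mf) * W mf = Nu f := (Finset.mem_filter.mp hmfS).2
    have hmg_eq : abv (g.coeff mg) * W mg = Nu g := (Finset.mem_filter.mp hmgS).2
    have hfmne : f.coeff mf ≠ 0 := Finsupp.mem_support_iff.mp hmf_sup
    have hgmne : g.coeff mg ≠ 0 := Finsupp.mem_support_iff.mp hmg_sup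
    have hNufpos : 0 < Nu f := hmf_eq ▸ mul_pos (abv.pos hfmne) (hWpos mf)
    have hNugpos : 0 < Nu g := hmg_eq ▸ mul_pos (abv.pos hgmne) (hWpos mg)
    -- the convolution expansion
    have hrw : ∀ x : Fin n → ℤ, (f * g).coeff x =
        ∑ p ∈ f.coeff.support ×ˢ g.coeff.support,
          (if p.1 + p.2 = x then f.coeff p.1 * g.coeff p.2 else 0) := by
      intro x
      rw [AddMonoidAlgebra.coeff_mul]
      simp only [Finsupp.sum]
      rw [← Finset.sum_product']
    -- upper bound
    have hub : Nu (f * g) ≤ Nu f * Nu g := by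
      refine hle _ _ fun m => ?_
      rw [hrw m]
      refine na_sum_le abv hna _ _ (mul_nonneg (hnonneg f) (hnonneg g)) (hWpos m).le ?_
      intro p _
      by_cases hps : p.1 + p.2 = m
      · rw [if_pos hps, map_mul]
        have hwm : W m = W p.1 * W p.2 := by rw [← hps, hWadd]
        calc abv (f.coeff p.1) * abv (g.coeff p.2) * W m
            = (abv (f.coeff p.1) * W p.1) * (abv (g.coeff p.2) * W p.2) := by rw [hwm]; ring
          _ ≤ Nu f * Nu g := mul_le_mul (hge f p.1) (hge g p.2)
              (mul_nonneg (abv.nonneg _) (hWpos _).le) (hnonneg f)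
      · rw [if_neg hps]
        simp only [map_zero, zero_mul]
        exact mul_nonneg (hnonneg f) (hnonneg g)
    -- lower bound via the dominant term at mf + mg
    set t : (Fin n → ℤ) × (Fin n → ℤ) → K :=
      fun p => if p.1 + p.2 = mf + mg then f.coeff p.1 * g.coeff p.2 else 0 with ht
    have ht0 : t (mf, mg) = f.coeff mf * g.coeff mg := by simp [ht]
    have ht0ne : t (mf, mg) ≠ 0 := by rw [ht0]; exact mul_ne_zero hfmne hgmne
    have key : ∀ p ∈ f.coeff.support ×ˢ g.coeff.support, p ≠ (mf, mg) →
        abv (t p) < abv (t (mf, mg)) := by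
      intro p hp hne
      rw [ht0, map_mul]
      have habpos : 0 < abv (f.coeff mf) * abv (g.coeff mg) :=
        mul_pos (abv.pos hfmne) (abv.pos hgmne)
      by_cases hps : p.1 + p.2 = mf + mg
      · have htp : t p = f.coeff p.1 * g.coeff p.2 := if_pos hps
        rw [htp, map_mul]
        have hws : W p.1 * W p.2 = W mf * W mg := by
          rw [← hWadd, ← hWadd, hps]
        have conclude : (abv (f.coeff p.1) * W p.1) * (abv (g.coeff p.2) * W p.2) < Nu f * Nu g →
            abv (f.coeff p.1) * abv (g.coeff p.2) < abv (f.coeff mf) * abv (g.coeff mg) := by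
          intro hstrict
          have hlhs : (abv (f.coeff p.1) * abv (g.coeff p.2)) * (W mf * W mg)
              = (abv (f.coeff p.1) * W p.1) * (abv (g.coeff p.2) * W p.2) := by
            rw [← hws]; ring
          have hrhs : (abv (f.coeff mf) * abv (g.coeff mg)) * (W mf * W mg) = Nu f * Nu g := by
            rw [← hmf_eq, ← hmg_eq]; ring
          have := hlhs ▸ hrhs ▸ hstrict
          exact lt_of_mul_lt_mul_right this (mul_pos (hWpos mf) (hWpos mg)).le
        by_cases e1 : abv (f.coeff p.1) * W p.1 = Nu f
        · by_cases e2 : abv (g.coeff p.2) * W p.2 = Nu g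
          · -- both maximal: lex contradiction
            exfalso
            have hp1S : p.1 ∈ Sf := Finset.mem_filter.mpr
              ⟨(Finset.mem_product.mp hp).1, e1⟩
            have hp2S : p.2 ∈ Sg := Finset.mem_filter.mpr
              ⟨(Finset.mem_product.mp hp).2, e2⟩
            have hle1 : toLex p.1 ≤ toLex mf := hmfmax _ hp1S
            have hle2 : toLex p.2 ≤ toLex mg := hmgmax _ hp2S
            have hp1 : p.1 = mf := by
              by_contra hne1
              have hlt : toLex p.1 < toLex mf :=
                lt_of_le_of_ne hle1 (fun h => hne1 (toLex.injective h))
              have h1 : toLex (p.1 + p.2) < toLex (mf + p.2) := lex_add_right_aux hlt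
              have h2 : toLex (mf + p.2) ≤ toLex (mf + mg) := by
                rcases lt_or_eq_of_le hle2 with h | h
                · exact (lex_add_left_aux h).le
                · rw [toLex.injective h]
              have := lt_of_lt_of_le h1 h2
              rw [hps] at this
              exact lt_irrefl _ this
            have hp2 : p.2 = mg := by
              subst hp1
              exact add_left_cancel hps
            exact hne (Prod.ext hp1 hp2)
          · -- strict in g
            refine conclude ?_
            calc (abv (f.coeff p.1) * W p.1) * (abv (g.coeff p.2) * W p.2)
                ≤ Nu f * (abv (g.coeff p.2) * W p.2) := mul_le_mul_of_nonneg_right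
                  (hge f p.1) (mul_nonneg (abv.nonneg _) (hWpos _).le)
              _ < Nu f * Nu g := (mul_lt_mul_iff_right₀ hNufpos).mpr
                  (lt_of_le_of_ne (hge g p.2) e2)
        · -- strict in f
          refine conclude ?_
          calc (abv (f.coeff p.1) * W p.1) * (abv (g.coeff p.2) * W p.2)
              ≤ (abv (f.coeff p.1) * W p.1) * Nu g := mul_le_mul_of_nonneg_left
                (hge g p.2) (mul_nonneg (abv.nonneg _) (hWpos _).le)
            _ < Nu f * Nu g := (mul_lt_mul_iff_left₀ hNugpos).mpr
                (lt_of_le_of_ne (hge f p.1) e1)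
      · have htz : t p = 0 := if_neg hps
        rw [htz]
        simpa using habpos
    have hp0mem : (mf, mg) ∈ f.coeff.support ×ˢ g.coeff.support :=
      Finset.mem_product.mpr ⟨hmf_sup, hmg_sup⟩
    have hcoeff : abv ((f * g).coeff (mf + mg)) = abv (f.coeff mf) * abv (g.coeff mg) := by
      rw [hrw (mf + mg)]
      have := na_sum_eq abv hna hp0mem ht0ne key
      rw [show (∑ p ∈ f.coeff.support ×ˢ g.coeff.support,
          (if p.1 + p.2 = mf + mg then f.coeff p.1 * g.coeff p.2 else 0)) =
          ∑ p ∈ f.coeff.support ×ˢ g.coeff.support, t p from rfl]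
      rw [this, ht0, map_mul]
    have hlb : Nu f * Nu g ≤ Nu (f * g) := by
      have h1 : Nu f * Nu g = abv ((f * g).coeff (mf + mg)) * W (mf + mg) := by
        rw [hcoeff, hWadd, ← hmf_eq, ← hmg_eq]; ring
      rw [h1]
      exact hge (f * g) (mf + mg)
    exact le_antisymm hub hlb
  · -- ultrametric inequality
    intro f g
    refine hle _ _ fun m => ?_
    have hfg : (f + g).coeff m = f.coeff m + g.coeff m := rfl
    rw [hfg]
    calc abv (f.coeff m + g.coeff m) * W m ≤ max (abv (f.coeff m)) (abv (g.coeff m)) * W m :=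
          mul_le_mul_of_nonneg_right (hna _ _) (hWpos m).le
      _ = max (abv (f.coeff m) * W m) (abv (g.coeff m) * W m) := max_mul_of_nonneg _ _ (hWpos m).le
      _ ≤ max (Nu f) (Nu g) := max_le_max (hge f m) (hge g m)
  · -- constants
    intro c
    refine le_antisymm (hle _ _ fun m => ?_) ?_
    · rcases eq_or_ne (0 : Fin n → ℤ) m with h | h
      · rw [← h]
        have : (AddMonoidAlgebra.single (0 : Fin n → ℤ) c).coeff 0 = c := by
          simp [AddMonoidAlgebra.coeff_single]
        rw [this, hW0, mul_one]
      · have : (AddMonoidAlgebra.single (0 : Fin n → ℤ) c).coeff m = 0 := by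
          rw [AddMonoidAlgebra.coeff_single, Finsupp.single_apply, if_neg h]
        rw [this]
        simp [abv.nonneg]
    · have h := hge (AddMonoidAlgebra.single (0 : Fin n → ℤ) c) 0
      have h0 : (AddMonoidAlgebra.single (0 : Fin n → ℤ) c).coeff 0 = c := by
        simp [AddMonoidAlgebra.coeff_single]
      rw [h0, hW0, mul_one] at h
      exact h
end

section
/- Let F ⊂ ℝ^d be a bounded fundamental domain of a complete lattice Λ_0 (so ℝ^d is the disjoint union of λ + F, λ ∈ Λ_0) and let Ω ⊂ ℝ^d be a bounded measurable set whose boundary has measure zero. Then the number N_m of lattice points λ ∈ (1/m)Λ_0 with λ + (1/m)F ⊂ Ω satisfies lim_{m→∞} N_m / m^d = vol(Ω) / vol(F). -/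
open MeasureTheory Filter

open Metric Bornology Pointwise in
private lemma mem_cthickening_frontier_aux {E : Type*} [NormedAddCommGroup E] [NormedSpace ℝ E]
    [FiniteDimensional ℝ E] {Ω : Set E} {x y : E} {δ : ℝ} (hx : x ∈ Ω) (hy : y ∉ Ω)
    (hd : dist x y ≤ δ) : x ∈ cthickening δ (frontier Ω) := by
  have hne : Ω ≠ Set.univ := fun h => hy (h ▸ Set.mem_univ y)
  obtain ⟨p, hp, hpd⟩ := exists_mem_frontier_infDist_compl_eq_dist hx hne
  refine mem_cthickening_of_dist_le x p δ _ hp ?_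
  rw [← hpd]
  exact le_trans (infDist_le_dist_of_mem hy) hd

open Metric Bornology Pointwise

/-- Let `F ⊂ ℝ^d` be a bounded measurable fundamental domain of a
complete lattice `Λ₀` (so `ℝ^d` is the disjoint union of the translates `λ + F`,
`λ ∈ Λ₀`), and let `Ω ⊂ ℝ^d` be a bounded measurable set whose boundary has measure zero.
Then the number `N_m` of lattice points `λ ∈ (1/m)Λ₀` with `λ + (1/m)F ⊆ Ω` satisfies
`lim_{m→∞} N_m / m^d = vol(Ω) / vol(F)`. -/
theorem lattice_translate_counting (d : ℕ)
    (Λ₀ : Submodule ℤ (EuclideanSpace ℝ (Fin d))) [DiscreteTopology Λ₀] [IsZLattice ℝ Λ₀]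
    (F : Set (EuclideanSpace ℝ (Fin d)))
    (hFbdd : Bornology.IsBounded F) (hFmeas : MeasurableSet F)
    (hFund : ∀ x : EuclideanSpace ℝ (Fin d),
      ∃! l : Λ₀, x - (l : EuclideanSpace ℝ (Fin d)) ∈ F)
    (Ω : Set (EuclideanSpace ℝ (Fin d)))
    (hΩbdd : Bornology.IsBounded Ω) (hΩmeas : MeasurableSet Ω)
    (hΩfr : volume (frontier Ω) = 0)
    (N : ℕ → ℕ)
    (hN : ∀ m : ℕ, N m = Nat.card
      {l : Λ₀ // ∀ x ∈ F, (m : ℝ)⁻¹ • ((l : EuclideanSpace ℝ (Fin d)) + x) ∈ Ω}) :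
    Tendsto (fun m : ℕ => (N m : ℝ) / (m : ℝ) ^ d) atTop
      (nhds ((volume Ω).toReal / (volume F).toReal)) := by
  classical
  -- F is nonempty
  obtain ⟨l₀, hl₀, -⟩ := hFund 0
  obtain ⟨x₀, hx₀⟩ : F.Nonempty := ⟨0 - (l₀ : (EuclideanSpace ℝ (Fin d))), hl₀⟩
  -- volume of F is finite and nonzero
  have hFfin : volume F ≠ ⊤ := hFbdd.measure_lt_top.ne
  have hF0 : volume F ≠ 0 := by
    intro h0
    have hcover : (Set.univ : Set (EuclideanSpace ℝ (Fin d))) ⊆ ⋃ l : Λ₀, ((l : (EuclideanSpace ℝ (Fin d))) +ᵥ F) := by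
      intro x _
      obtain ⟨l, hl, -⟩ := hFund x
      exact Set.mem_iUnion.2 ⟨l, Set.mem_vadd_set.2 ⟨x - l, hl, add_sub_cancel _ _⟩⟩
    have h1 : volume (Set.univ : Set (EuclideanSpace ℝ (Fin d))) = 0 := by
      refine measure_mono_null hcover (measure_iUnion_null fun l => ?_)
      rw [measure_vadd volume _ F]; exact h0
    have h2 : 0 < volume (Set.univ : Set (EuclideanSpace ℝ (Fin d))) :=
      isOpen_univ.measure_pos volume Set.univ_nonempty
    exact h2.ne' h1
  set R := Metric.diam F with hRdef
  set c := (volume F).toReal with hc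
  have hcpos : 0 < c := ENNReal.toReal_pos hF0 hFfin
  set V := (volume Ω).toReal with hV
  set t : ℕ → ℝ := fun m => (volume (cthickening (R / (m : ℝ)) (frontier Ω))).toReal with htdef
  have hfrbdd : IsBounded (frontier Ω) := hΩbdd.closure.subset frontier_subset_closure
  have htt : Tendsto t atTop (nhds 0) := by
    have h1 : Tendsto (fun δ : ℝ => volume (cthickening δ (frontier Ω))) (nhds 0)
        (nhds (volume (frontier Ω))) :=
      tendsto_measure_cthickening_of_isClosed
        ⟨1, one_pos, hfrbdd.cthickening.measure_lt_top.ne⟩ isClosed_frontier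
    rw [hΩfr] at h1
    have h2 := h1.comp (tendsto_const_div_atTop_nhds_zero_nat R)
    have := (ENNReal.tendsto_toReal (a := 0) (by simp)).comp h2
    simpa [htdef, Function.comp_def] using this
  obtain ⟨CΩ, hCΩ⟩ := hΩbdd.subset_closedBall 0
  -- the key inequalities
  have key : ∀ m : ℕ, 1 ≤ m →
      (N m : ℝ) * ((m : ℝ)⁻¹) ^ d * c ≤ V ∧
      V ≤ (N m : ℝ) * ((m : ℝ)⁻¹) ^ d * c + t m := by
    intro m hm
    have hm0 : (m : ℝ) ≠ 0 := Nat.cast_ne_zero.2 (by omega)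
    have hminv : (0 : ℝ) ≤ (m : ℝ)⁻¹ := by positivity
    set A : Set Λ₀ := {l : Λ₀ | ∀ x ∈ F, (m : ℝ)⁻¹ • ((l : (EuclideanSpace ℝ (Fin d))) + x) ∈ Ω} with hAdef
    set P : Λ₀ → Set (EuclideanSpace ℝ (Fin d)) := fun l => (m : ℝ)⁻¹ • (((l : (EuclideanSpace ℝ (Fin d)))) +ᵥ F) with hPdef
    -- membership in pieces
    have hPiff : ∀ (l : Λ₀) (z : (EuclideanSpace ℝ (Fin d))), z ∈ P l ↔ ∃ x ∈ F, (m : ℝ)⁻¹ • ((l : (EuclideanSpace ℝ (Fin d))) + x) = z := by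
      intro l z
      constructor
      · rintro ⟨w, hw, rfl⟩
        obtain ⟨u, hu, rfl⟩ := hw
        exact ⟨u, hu, rfl⟩
      · rintro ⟨x, hx, rfl⟩
        exact ⟨(l : (EuclideanSpace ℝ (Fin d))) + x, ⟨x, hx, rfl⟩, rfl⟩
    -- pieces of good points are inside Ω
    have hPsub : ∀ l ∈ A, P l ⊆ Ω := by
      intro l hl z hz
      obtain ⟨x, hx, rfl⟩ := (hPiff l z).1 hz
      exact hl x hx
    -- volume of each piece
    have hPvol : ∀ l : Λ₀, volume (P l) = ENNReal.ofReal (((m : ℝ)⁻¹) ^ d) * volume F := by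
      intro l
      rw [hPdef]
      rw [Measure.addHaar_smul_of_nonneg volume hminv, finrank_euclideanSpace_fin,
        measure_vadd volume _ F]
    -- pieces are pairwise disjoint
    have hPdisj : Set.univ.PairwiseDisjoint P := by
      intro l _ l' _ hne
      refine Set.disjoint_left.2 fun z hz hz' => hne ?_
      obtain ⟨x, hx, hxe⟩ := (hPiff l z).1 hz
      obtain ⟨y, hy, hye⟩ := (hPiff l' z).1 hz'
      have heq : (l : (EuclideanSpace ℝ (Fin d))) + x = (l' : (EuclideanSpace ℝ (Fin d))) + y := by
        have := hxe.trans hye.symm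
        exact smul_right_injective (EuclideanSpace ℝ (Fin d)) (inv_ne_zero hm0) this
      have h1 : ((l : (EuclideanSpace ℝ (Fin d))) + x) - (l : (EuclideanSpace ℝ (Fin d))) ∈ F := by simpa using hx
      have h2 : ((l : (EuclideanSpace ℝ (Fin d))) + x) - (l' : (EuclideanSpace ℝ (Fin d))) ∈ F := by rw [heq]; simpa using hy
      obtain ⟨w, hw, huniq⟩ := hFund ((l : (EuclideanSpace ℝ (Fin d))) + x)
      exact (huniq l h1).trans (huniq l' h2).symm
    -- A is finite
    have hAfin : A.Finite := by
      haveI : DiscreteTopology (↥(Λ₀ : Set (EuclideanSpace ℝ (Fin d)))) := ‹DiscreteTopology Λ₀›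
      haveI : DiscreteTopology Λ₀.toAddSubgroup := ‹DiscreteTopology Λ₀›
      have hfin : (Metric.closedBall (0 : (EuclideanSpace ℝ (Fin d))) ((m : ℝ) * CΩ + ‖x₀‖) ∩ (Λ₀ : Set (EuclideanSpace ℝ (Fin d)))).Finite :=
        Metric.finite_isBounded_inter_isClosed (isDiscrete_iff_discreteTopology.mpr ‹DiscreteTopology (↥(Λ₀ : Set (EuclideanSpace ℝ (Fin d))))›) isBounded_closedBall
          (AddSubgroup.isClosed_of_discrete (H := Λ₀.toAddSubgroup))
      refine Set.Finite.of_finite_image (f := fun l => (l : (EuclideanSpace ℝ (Fin d)))) (hfin.subset ?_)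
        Subtype.val_injective.injOn
      rintro - ⟨l, hl, rfl⟩
      refine ⟨?_, l.2⟩
      have h1 : (m : ℝ)⁻¹ • ((l : (EuclideanSpace ℝ (Fin d))) + x₀) ∈ Ω := hl x₀ hx₀
      have h2 : ‖(m : ℝ)⁻¹ • ((l : (EuclideanSpace ℝ (Fin d))) + x₀)‖ ≤ CΩ := by
        simpa [dist_eq_norm] using hCΩ h1
      have h3 : ‖(l : (EuclideanSpace ℝ (Fin d))) + x₀‖ ≤ (m : ℝ) * CΩ := by
        rw [norm_smul, norm_inv, Real.norm_natCast] at h2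
        have hmpos : (0 : ℝ) < m := by positivity
        calc ‖(l : (EuclideanSpace ℝ (Fin d))) + x₀‖ = (m : ℝ) * ((m : ℝ)⁻¹ * ‖(l : (EuclideanSpace ℝ (Fin d))) + x₀‖) := by
              field_simp
          _ ≤ (m : ℝ) * CΩ := by
              exact mul_le_mul_of_nonneg_left h2 (le_of_lt hmpos)
      have h4 : ‖(l : (EuclideanSpace ℝ (Fin d)))‖ ≤ (m : ℝ) * CΩ + ‖x₀‖ := by
        calc ‖(l : (EuclideanSpace ℝ (Fin d)))‖ = ‖((l : (EuclideanSpace ℝ (Fin d))) + x₀) - x₀‖ := by rw [add_sub_cancel_right]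
          _ ≤ ‖(l : (EuclideanSpace ℝ (Fin d))) + x₀‖ + ‖x₀‖ := norm_sub_le _ _
          _ ≤ (m : ℝ) * CΩ + ‖x₀‖ := by linarith
      simpa [Metric.mem_closedBall, dist_eq_norm] using h4
    -- the cardinality
    have hcard : N m = hAfin.toFinset.card := by
      rw [hN m]
      calc Nat.card {l : Λ₀ // ∀ x ∈ F, (m : ℝ)⁻¹ • ((l : (EuclideanSpace ℝ (Fin d))) + x) ∈ Ω}
          = Nat.card A := rfl
        _ = A.ncard := Nat.card_coe_set_eq A
        _ = hAfin.toFinset.card := Set.ncard_eq_toFinset_card A hAfin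
    -- the union of good pieces
    set U : Set (EuclideanSpace ℝ (Fin d)) := ⋃ l ∈ hAfin.toFinset, P l with hUdef
    have hUvol : volume U = (N m : ENNReal) * (ENNReal.ofReal (((m : ℝ)⁻¹) ^ d) * volume F) := by
      rw [hUdef, measure_biUnion_finset (fun l _ l' _ hne => hPdisj trivial trivial hne)
        (fun l _ => by
          rw [hPdef]
          exact (hFmeas.const_vadd _).const_smul₀ _)]
      rw [Finset.sum_congr rfl fun l _ => hPvol l, Finset.sum_const, nsmul_eq_mul, hcard]
    have hXfin : (N m : ENNReal) * (ENNReal.ofReal (((m : ℝ)⁻¹) ^ d) * volume F) ≠ ⊤ :=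
      ENNReal.mul_ne_top (ENNReal.natCast_ne_top _)
        (ENNReal.mul_ne_top ENNReal.ofReal_ne_top hFfin)
    have hXtoReal : ((N m : ENNReal) * (ENNReal.ofReal (((m : ℝ)⁻¹) ^ d) * volume F)).toReal
        = (N m : ℝ) * ((m : ℝ)⁻¹) ^ d * c := by
      rw [ENNReal.toReal_mul, ENNReal.toReal_mul, ENNReal.toReal_natCast,
        ENNReal.toReal_ofReal (by positivity), hc, mul_assoc]
    -- upper bound
    have hfinΩ : volume Ω ≠ ⊤ := hΩbdd.measure_lt_top.ne
    have hup : (N m : ℝ) * ((m : ℝ)⁻¹) ^ d * c ≤ V := by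
      have hsub : U ⊆ Ω := Set.iUnion₂_subset fun l hl => hPsub l (hAfin.mem_toFinset.1 hl)
      have := measure_mono (μ := volume) hsub
      rw [hUvol] at this
      have := ENNReal.toReal_mono hfinΩ this
      rwa [hXtoReal] at this
    refine ⟨hup, ?_⟩
    -- lower bound: Ω is covered by the good pieces and the thickened frontier
    have hcov : Ω ⊆ U ∪ cthickening (R / (m : ℝ)) (frontier Ω) := by
      intro x hx
      obtain ⟨l, hl, -⟩ := hFund ((m : ℝ) • x)
      have hxP : x ∈ P l := by
        refine (hPiff l x).2 ⟨(m : ℝ) • x - (l : (EuclideanSpace ℝ (Fin d))), hl, ?_⟩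
        rw [add_sub_cancel, inv_smul_smul₀ hm0]
      by_cases hgood : l ∈ A
      · exact Or.inl (Set.mem_biUnion (hAfin.mem_toFinset.2 hgood) hxP)
      · rw [hAdef, Set.mem_setOf_eq] at hgood
        push_neg at hgood
        obtain ⟨y, hyF, hyΩ⟩ := hgood
        refine Or.inr (mem_cthickening_frontier_aux hx hyΩ ?_)
        have hxeq : x = (m : ℝ)⁻¹ • ((m : ℝ) • x) := by rw [inv_smul_smul₀ hm0]
        calc dist x ((m : ℝ)⁻¹ • ((l : (EuclideanSpace ℝ (Fin d))) + y))
            = dist ((m : ℝ)⁻¹ • ((m : ℝ) • x)) ((m : ℝ)⁻¹ • ((l : (EuclideanSpace ℝ (Fin d))) + y)) := by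
              rw [← hxeq]
          _ = |(m : ℝ)⁻¹| * dist ((m : ℝ) • x) ((l : (EuclideanSpace ℝ (Fin d))) + y) := dist_smul₀ _ _ _
          _ ≤ (m : ℝ)⁻¹ * R := by
              rw [abs_of_nonneg hminv]
              refine mul_le_mul_of_nonneg_left ?_ hminv
              have : (m : ℝ) • x = (l : (EuclideanSpace ℝ (Fin d))) + ((m : ℝ) • x - (l : (EuclideanSpace ℝ (Fin d)))) := by
                rw [add_sub_cancel]
              rw [this, dist_add_left]
              exact Metric.dist_le_diam_of_mem hFbdd hl hyF
          _ = R / (m : ℝ) := by rw [inv_mul_eq_div]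
    have hcthfin : volume (cthickening (R / (m : ℝ)) (frontier Ω)) ≠ ⊤ :=
      hfrbdd.cthickening.measure_lt_top.ne
    have hlow := measure_mono (μ := volume) hcov
    have hlow2 : volume Ω ≤ (N m : ENNReal) * (ENNReal.ofReal (((m : ℝ)⁻¹) ^ d) * volume F)
        + volume (cthickening (R / (m : ℝ)) (frontier Ω)) := by
      calc volume Ω ≤ volume (U ∪ cthickening (R / (m : ℝ)) (frontier Ω)) := hlow
        _ ≤ volume U + volume (cthickening (R / (m : ℝ)) (frontier Ω)) := measure_union_le _ _
        _ = _ := by rw [hUvol]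
    have := ENNReal.toReal_mono (by exact ENNReal.add_ne_top.2 ⟨hXfin, hcthfin⟩) hlow2
    rwa [ENNReal.toReal_add hXfin hcthfin, hXtoReal] at this
  -- squeeze
  have hup' : ∀ᶠ m in atTop, (N m : ℝ) / (m : ℝ) ^ d ≤ V / c := by
    filter_upwards [eventually_ge_atTop 1] with m hm
    rw [le_div_iff₀ hcpos]
    calc (N m : ℝ) / (m : ℝ) ^ d * c = (N m : ℝ) * ((m : ℝ)⁻¹) ^ d * c := by
          rw [div_eq_mul_inv, inv_pow]
      _ ≤ V := (key m hm).1
  have hlow' : ∀ᶠ m in atTop, (V - t m) / c ≤ (N m : ℝ) / (m : ℝ) ^ d := by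
    filter_upwards [eventually_ge_atTop 1] with m hm
    rw [div_le_iff₀ hcpos]
    have h := (key m hm).2
    calc V - t m ≤ (N m : ℝ) * ((m : ℝ)⁻¹) ^ d * c + t m - t m := by linarith
      _ = (N m : ℝ) / (m : ℝ) ^ d * c := by rw [div_eq_mul_inv, inv_pow]; ring
  have hL : Tendsto (fun m : ℕ => (V - t m) / c) atTop (nhds (V / c)) := by
    have h1 : Tendsto (fun m : ℕ => V - t m) atTop (nhds (V - 0)) :=
      tendsto_const_nhds.sub htt
    simpa using h1.div_const c
  exact tendsto_of_tendsto_of_tendsto_of_le_of_le' hL tendsto_const_nhds hlow' hup'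
end
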